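/- Let n ≥ 1. Define F_es = (1/2ⁿ) ( I + Σ_{x ≠ y ∈ {0,1}ⁿ} |x x⟩⟨y y| ) and F_comp = Σ_{x ∈ {0,1}ⁿ} |x x⟩⟨x x|, both 4ⁿ×4ⁿ matrices indexed by pairs of bit strings. Then the total frame operator F = F_es + F_comp equals (1/2ⁿ) I + |Φ⟩⟨Φ| + (1 − 1/2ⁿ) Σ_{x ∈ {0,1}ⁿ} |x x⟩⟨x x|, where Φ = 2^{−n/2} Σ_{x ∈ {0,1}ⁿ} e_{(x,x)}, and F is positive definite (in particular invertible); hence the union of the ESPOVM and the computational basis is informationally complete. -/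

import Mathlib

open Finset Matrix
open scoped ComplexOrder

/-- Bit strings of length `n`. -/
abbrev Bits (n : ℕ) := Fin n → Fin 2

/-- The ESPOVM frame operator `F_es = (1/2ⁿ)(I + Σ_{x ≠ y} |x x⟩⟨y y|)`. -/
noncomputable def Fes (n : ℕ) : Matrix (Bits n × Bits n) (Bits n × Bits n) ℂ :=
  ((2 : ℂ) ^ n)⁻¹ •
    ((1 : Matrix (Bits n × Bits n) (Bits n × Bits n) ℂ)
      + ∑ p ∈ Finset.univ.filter (fun p : Bits n × Bits n => p.1 ≠ p.2),
          Matrix.single (p.1, p.1) (p.2, p.2) (1 : ℂ))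

/-- The computational-basis frame operator `F_comp = Σ_x |x x⟩⟨x x|`. -/
noncomputable def Fcomp (n : ℕ) : Matrix (Bits n × Bits n) (Bits n × Bits n) ℂ :=
  ∑ x : Bits n, Matrix.single (x, x) (x, x) (1 : ℂ)

/-- The normalized vector `Φ = 2^{−n/2} Σ_x e_{(x,x)}`. -/
noncomputable def PhiVec (n : ℕ) : Bits n × Bits n → ℂ :=
  fun p => if p.1 = p.2 then ((Real.sqrt (2 ^ n) : ℂ))⁻¹ else 0

lemma sum_offdiag_apply (n : ℕ) (p q : Bits n × Bits n) :
    (∑ r ∈ Finset.univ.filter (fun r : Bits n × Bits n => r.1 ≠ r.2),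
        Matrix.single (r.1, r.1) (r.2, r.2) (1 : ℂ)) p q
      = if p.1 = p.2 ∧ q.1 = q.2 ∧ p.1 ≠ q.1 then 1 else 0 := by
  obtain ⟨p1, p2⟩ := p
  obtain ⟨q1, q2⟩ := q
  rw [Matrix.sum_apply]
  by_cases h : p1 = p2 ∧ q1 = q2 ∧ p1 ≠ q1
  · obtain ⟨h1, h2, h3⟩ := h
    subst h1; subst h2
    have hmem : ((p1, q1) : Bits n × Bits n) ∈
        Finset.univ.filter (fun r : Bits n × Bits n => r.1 ≠ r.2) :=
      Finset.mem_filter.mpr ⟨Finset.mem_univ _, h3⟩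
    rw [Finset.sum_eq_single_of_mem _ hmem (fun b _ hbne => by
      simp only [Matrix.single, Matrix.of_apply, ite_eq_right_iff, Prod.mk.injEq]
      rintro ⟨⟨e1, e2⟩, ⟨e3, e4⟩⟩
      exact absurd (Prod.ext e1 e3) hbne)]
    simp [Matrix.single, h3]
  · rw [if_neg h]
    apply Finset.sum_eq_zero
    intro r hr
    simp only [Finset.mem_filter] at hr
    simp only [Matrix.single, Matrix.of_apply, ite_eq_right_iff, Prod.mk.injEq]
    rintro ⟨⟨e1, e2⟩, ⟨e3, e4⟩⟩
    exact absurd ⟨e1.symm.trans e2, e3.symm.trans e4, fun hh => hr.2 ((e1.trans hh).trans e3.symm)⟩ h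

lemma fcomp_apply (n : ℕ) (p q : Bits n × Bits n) :
    Fcomp n p q = if p.1 = p.2 ∧ p = q then 1 else 0 := by
  obtain ⟨p1, p2⟩ := p
  obtain ⟨q1, q2⟩ := q
  rw [Fcomp, Matrix.sum_apply]
  by_cases h : p1 = p2 ∧ (p1, p2) = (q1, q2)
  · obtain ⟨h1, h2⟩ := h
    subst h1
    obtain ⟨rfl, rfl⟩ := Prod.mk.injEq .. ▸ Prod.ext_iff.mp h2
    rw [Finset.sum_eq_single_of_mem p1 (Finset.mem_univ _) (fun b _ hbne => by
      simp only [Matrix.single, Matrix.of_apply, ite_eq_right_iff, Prod.mk.injEq]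
      rintro ⟨⟨e1, e2⟩, _⟩
      exact absurd e1 hbne)]
    simp [Matrix.single]
  · rw [if_neg h]
    apply Finset.sum_eq_zero
    intro x _
    simp only [Matrix.single, Matrix.of_apply, ite_eq_right_iff, Prod.mk.injEq]
    rintro ⟨⟨e1, e2⟩, ⟨e3, e4⟩⟩
    exact absurd ⟨e1.symm.trans e2, Prod.ext (e1.symm.trans e3) (e2.symm.trans e4)⟩ h

lemma phi_prod (n : ℕ) :
    ((Real.sqrt (2 ^ n) : ℂ))⁻¹ * ((Real.sqrt (2 ^ n) : ℂ))⁻¹ = ((2 : ℂ) ^ n)⁻¹ := by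
  rw [← mul_inv, ← Complex.ofReal_mul, Real.mul_self_sqrt (by positivity)]
  push_cast
  ring_nf

lemma fcomp_diag (n : ℕ) :
    (∑ x : Bits n, Matrix.single (x, x) (x, x) (1 : ℂ))
      = Matrix.diagonal (fun p : Bits n × Bits n => if p.1 = p.2 then (1 : ℂ) else 0) := by
  ext p q
  rw [← Fcomp, fcomp_apply]
  by_cases h : p = q
  · subst h; simp [Matrix.diagonal_apply_eq]
  · simp [h, Matrix.diagonal_apply_ne _ h]

/-- the total frame operator `F = F_es + F_comp` equals
`(1/2ⁿ) I + |Φ⟩⟨Φ| + (1 − 1/2ⁿ) Σ_x |x x⟩⟨x x|` and is positive definite, in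
particular invertible; hence ESPOVM together with the computational basis is
informationally complete. -/
theorem total_frame_operator_pos_def (n : ℕ) (hn : 1 ≤ n) :
    (Fes n + Fcomp n =
        ((2 : ℂ) ^ n)⁻¹ • (1 : Matrix (Bits n × Bits n) (Bits n × Bits n) ℂ)
          + Matrix.vecMulVec (PhiVec n) (star (PhiVec n))
          + (1 - ((2 : ℂ) ^ n)⁻¹) • ∑ x : Bits n, Matrix.single (x, x) (x, x) (1 : ℂ))
      ∧ (Fes n + Fcomp n).PosDef ∧ IsUnit (Fes n + Fcomp n) := by
  have hc2 : ((2 : ℂ) ^ n)⁻¹ = ((((2 : ℝ) ^ n)⁻¹ : ℝ) : ℂ) := by push_cast; ring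
  have hone : (1 : ℝ) ≤ (2 : ℝ) ^ n := one_le_pow₀ one_le_two
  have hpos : (0 : ℝ) < ((2 : ℝ) ^ n)⁻¹ := by positivity
  have heq : Fes n + Fcomp n =
        ((2 : ℂ) ^ n)⁻¹ • (1 : Matrix (Bits n × Bits n) (Bits n × Bits n) ℂ)
          + Matrix.vecMulVec (PhiVec n) (star (PhiVec n))
          + (1 - ((2 : ℂ) ^ n)⁻¹) • ∑ x : Bits n, Matrix.single (x, x) (x, x) (1 : ℂ) := by
    ext p q
    have hphi : Matrix.vecMulVec (PhiVec n) (star (PhiVec n)) p q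
        = if p.1 = p.2 ∧ q.1 = q.2 then ((2 : ℂ) ^ n)⁻¹ else 0 := by
      by_cases hp : p.1 = p.2 <;> by_cases hq : q.1 = q.2 <;>
        simp [Matrix.vecMulVec_apply, PhiVec, hp, hq, Complex.star_def, map_inv₀,
          Complex.conj_ofReal, phi_prod n]
    simp only [Matrix.add_apply, Fes, Matrix.smul_apply, smul_eq_mul]
    rw [sum_offdiag_apply, ← Fcomp, fcomp_apply, hphi]
    simp only [Matrix.one_apply, Matrix.add_apply]
    by_cases hpq : p = q
    · subst hpq
      by_cases hd : p.1 = p.2 <;> simp [hd] <;> ring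
    · by_cases hd1 : p.1 = p.2 <;> by_cases hd2 : q.1 = q.2
      · have hne : p.1 ≠ q.1 := by
          intro h; exact hpq (Prod.ext h (hd1 ▸ hd2 ▸ h))
        simp [hd1, hd2, hne, hpq]
        intro h2
        exact absurd (hd1.trans (h2.trans hd2.symm)) hne
      · simp [hd1, hd2, hpq]
      · simp [hd1, hd2, hpq]
      · simp [hd1, hd2, hpq]
  have hPD : (Fes n + Fcomp n).PosDef := by
    rw [heq]
    have h1 : (((2 : ℂ) ^ n)⁻¹ • (1 : Matrix (Bits n × Bits n) (Bits n × Bits n) ℂ)).PosDef := by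
      rw [hc2, ← Matrix.diagonal_one, ← Matrix.diagonal_smul]
      refine Matrix.PosDef.diagonal (fun i => ?_)
      simp only [Pi.smul_apply, smul_eq_mul, mul_one]
      exact Complex.zero_lt_real.mpr hpos
    have h2 : (Matrix.vecMulVec (PhiVec n) (star (PhiVec n))).PosSemidef := by
      rw [Matrix.vecMulVec_eq Unit, ← Matrix.conjTranspose_replicateCol]
      exact Matrix.posSemidef_self_mul_conjTranspose _
    have h3 : ((1 - ((2 : ℂ) ^ n)⁻¹) •
        ∑ x : Bits n, Matrix.single (x, x) (x, x) (1 : ℂ)).PosSemidef := by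
      rw [fcomp_diag, ← Matrix.diagonal_smul]
      refine Matrix.PosSemidef.diagonal (fun i => ?_)
      simp only [Pi.smul_apply, smul_eq_mul, Pi.zero_apply]
      have hle : (0 : ℝ) ≤ 1 - ((2 : ℝ) ^ n)⁻¹ := by
        have := inv_le_one_of_one_le₀ hone
        linarith
      by_cases hi : i.1 = i.2
      · rw [if_pos hi, mul_one, hc2]
        have h1c : (1 : ℂ) - ((((2 : ℝ) ^ n)⁻¹ : ℝ) : ℂ) = (((1 - ((2 : ℝ) ^ n)⁻¹ : ℝ)) : ℂ) := by
          push_cast; ring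
        rw [h1c]
        exact Complex.zero_le_real.mpr hle
      · rw [if_neg hi, mul_zero]
    exact (h1.add_posSemidef h2).add_posSemidef h3
  exact ⟨heq, hPD, hPD.isUnit⟩
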